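/- Let X : Ω → ℝⁿ be a zero-mean random vector that is sub-Gaussian with matrix variance proxy Σ ≻ 0 (n × n positive definite). Then E[‖X‖²] ≤ tr(Σ) · E[‖X‖²_{Σ⁻¹}], and in particular E[‖X‖²] ≤ B(2,n) · tr(Σ), where B(2,n) := 2 · 2^{1/2} · (2e/n)^{n/2} · Γ((n+3)/2), ‖X‖ is the Euclidean norm, and ‖x‖²_{Σ⁻¹} := xᵀΣ⁻¹x. -/

import Mathlib

open MeasureTheory Matrix

noncomputable section

/-- A random vector `X` with mean `μ` is sub-Gaussian with matrix variance proxy `S`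
(`X ~ SG(μ, S)`): its moment generating function exists and
`E[exp(λᵀ(X − μ))] ≤ exp(λᵀ S λ / 2)` for all `λ ∈ ℝⁿ`. -/
def IsSubGaussianMat {Ω : Type*} [MeasurableSpace Ω] {n : ℕ} (P : Measure Ω)
    (X : Ω → Fin n → ℝ) (μ : Fin n → ℝ) (S : Matrix (Fin n) (Fin n) ℝ) : Prop :=
  ∀ l : Fin n → ℝ,
    Integrable (fun ω => Real.exp (l ⬝ᵥ (X ω - μ))) P ∧
    ∫ ω, Real.exp (l ⬝ᵥ (X ω - μ)) ∂P ≤ Real.exp ((l ⬝ᵥ (S *ᵥ l)) / 2)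

/-- The moment-bound constant `B(p,n) = p 2^{(p−1)/2} (2e/n)^{n/2} Γ((n+p+1)/2)`. -/
def B (p : ℝ) (n : ℕ) : ℝ :=
  p * 2 ^ ((p - 1) / 2) * (2 * Real.exp 1 / n) ^ ((n : ℝ) / 2) *
    Real.Gamma ((n + p + 1) / 2)


section Aux
variable {n : ℕ}

lemma entry_sq_le {A : Matrix (Fin n) (Fin n) ℝ} (hA : A.PosSemidef) (i j : Fin n) :
    A i j ^ 2 ≤ A i i * A j j := by
  have hsym : A j i = A i j := by
    have := hA.isHermitian
    conv_lhs => rw [← this]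
    simp [Matrix.conjTranspose_apply]
  have h : ∀ t : ℝ, 0 ≤ A i i * (t * t) + (2 * A i j) * t + A j j := by
    intro t
    have := hA.dotProduct_mulVec_nonneg (t • (Pi.single i 1 : Fin n → ℝ) + Pi.single j 1)
    simp only [star_trivial, Matrix.mulVec_add, Matrix.mulVec_smul, Matrix.mulVec_single,
      add_dotProduct, smul_dotProduct, dotProduct_add, smul_eq_mul,
      single_dotProduct, mul_one, Pi.add_apply, Pi.smul_apply, Pi.single_eq_same] at this
    simp only [MulOpposite.op_one, one_smul, Matrix.col_apply, hsym] at this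
    nlinarith [this]
  have := discrim_le_zero h
  rw [discrim] at this
  nlinarith

lemma diag_nonneg {A : Matrix (Fin n) (Fin n) ℝ} (hA : A.PosSemidef) (i : Fin n) :
    0 ≤ A i i := by
  have := hA.dotProduct_mulVec_nonneg (Pi.single i 1)
  simpa [single_dotProduct, Matrix.mulVec_single] using this

lemma quad_le_trace_mul {A : Matrix (Fin n) (Fin n) ℝ} (hA : A.PosSemidef) (y : Fin n → ℝ) :
    y ⬝ᵥ (A *ᵥ y) ≤ A.trace * (y ⬝ᵥ y) := by
  have hy : y ⬝ᵥ y = ∑ i, y i ^ 2 := by simp [dotProduct, sq]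
  have hq : 0 ≤ y ⬝ᵥ (A *ᵥ y) := by simpa using hA.dotProduct_mulVec_nonneg y
  have htr : A.trace = ∑ i, A i i := by simp [Matrix.trace, Matrix.diag]
  have htrnn : 0 ≤ A.trace := htr ▸ Finset.sum_nonneg fun i _ => diag_nonneg hA i
  have hynn : 0 ≤ y ⬝ᵥ y := hy ▸ Finset.sum_nonneg fun i _ => sq_nonneg _
  -- Cauchy-Schwarz
  have cs1 : (y ⬝ᵥ (A *ᵥ y)) ^ 2 ≤ (∑ i, y i ^ 2) * ∑ i, ((A *ᵥ y) i) ^ 2 := by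
    simpa [dotProduct] using
      Finset.sum_mul_sq_le_sq_mul_sq Finset.univ y (fun i => (A *ᵥ y) i)
  have cs2 : ∀ i, ((A *ᵥ y) i) ^ 2 ≤ (∑ j, A i j ^ 2) * ∑ j, y j ^ 2 := fun i => by
    simpa [Matrix.mulVec, dotProduct] using
      Finset.sum_mul_sq_le_sq_mul_sq Finset.univ (fun j => A i j) y
  have frob : (∑ i, ∑ j, A i j ^ 2) ≤ A.trace ^ 2 := by
    rw [htr, sq, Finset.sum_mul_sum]
    refine Finset.sum_le_sum fun i _ => Finset.sum_le_sum fun j _ => entry_sq_le hA i j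
  have key : (y ⬝ᵥ (A *ᵥ y)) ^ 2 ≤ (A.trace * (y ⬝ᵥ y)) ^ 2 := by
    have h2 : (∑ i, ((A *ᵥ y) i) ^ 2) ≤ (∑ i, ∑ j, A i j ^ 2) * ∑ j, y j ^ 2 := by
      rw [Finset.sum_mul]
      exact Finset.sum_le_sum fun i _ => cs2 i
    have hsnn : 0 ≤ ∑ i, y i ^ 2 := Finset.sum_nonneg fun i _ => sq_nonneg _
    calc (y ⬝ᵥ (A *ᵥ y)) ^ 2 ≤ (∑ i, y i ^ 2) * ∑ i, ((A *ᵥ y) i) ^ 2 := cs1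
      _ ≤ (∑ i, y i ^ 2) * ((∑ i, ∑ j, A i j ^ 2) * ∑ j, y j ^ 2) := by
          exact mul_le_mul_of_nonneg_left h2 hsnn
      _ ≤ (∑ i, y i ^ 2) * (A.trace ^ 2 * ∑ j, y j ^ 2) := by
          refine mul_le_mul_of_nonneg_left (mul_le_mul_of_nonneg_right frob hsnn) hsnn
      _ = (A.trace * (y ⬝ᵥ y)) ^ 2 := by rw [hy]; ring
  nlinarith [key, hq, mul_nonneg htrnn hynn]

open scoped MatrixOrder in
lemma dot_le_trace_mul_inv {A : Matrix (Fin n) (Fin n) ℝ} (hA : A.PosDef) (x : Fin n → ℝ) :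
    x ⬝ᵥ x ≤ A.trace * (x ⬝ᵥ (A⁻¹ *ᵥ x)) := by
  set S := CFC.sqrt A with hSdef
  have hS : S * S = A := CFC.sqrt_mul_sqrt_self A hA.posSemidef.nonneg
  have hSpsd : S.PosSemidef := (CFC.sqrt_nonneg A).posSemidef
  have hdet : IsUnit S.det := by
    have h2 : S.det * S.det = A.det := by rw [← Matrix.det_mul, hS]
    have : A.det ≠ 0 := ne_of_gt hA.det_pos
    exact isUnit_iff_ne_zero.2 (fun h => this (by rw [← h2, h, mul_zero]))
  have hinv : S⁻¹ * S = 1 := Matrix.nonsing_inv_mul S hdet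
  have hinv' : S * S⁻¹ = 1 := Matrix.mul_nonsing_inv S hdet
  have hAinv : A⁻¹ = S⁻¹ * S⁻¹ := by rw [← hS, Matrix.mul_inv_rev]
  set y := S⁻¹ *ᵥ x with hy
  have hxy : S *ᵥ y = x := by
    rw [hy, Matrix.mulVec_mulVec, hinv', Matrix.one_mulVec]
  have hST : Sᵀ = S := by
    have := hSpsd.isHermitian
    simpa [Matrix.IsHermitian, Matrix.conjTranspose_eq_transpose_of_trivial] using this
  have shift : ∀ u w : Fin n → ℝ, (S *ᵥ u) ⬝ᵥ w = u ⬝ᵥ (S *ᵥ w) := fun u w => by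
    rw [Matrix.dotProduct_mulVec, ← Matrix.mulVec_transpose, hST]
  have h1 : x ⬝ᵥ x = y ⬝ᵥ (A *ᵥ y) := by
    conv_lhs => rw [← hxy]
    rw [shift, Matrix.mulVec_mulVec, hS]
  have h2 : x ⬝ᵥ (A⁻¹ *ᵥ x) = y ⬝ᵥ y := by
    have hax : A⁻¹ *ᵥ x = S⁻¹ *ᵥ y := by
      conv_lhs => rw [← hxy]
      rw [hAinv, Matrix.mulVec_mulVec, Matrix.mul_assoc, hinv, Matrix.mul_one]
    rw [hax]
    conv_lhs => rw [← hxy]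
    rw [shift, Matrix.mulVec_mulVec, hinv', Matrix.one_mulVec]
  rw [h1, h2]
  exact quad_le_trace_mul hA.posSemidef y

end Aux

lemma B_step (m : ℕ) (hm : 1 ≤ m) : B 2 m ≤ B 2 (m + 2) := by
  have hmr : (1:ℝ) ≤ (m:ℝ) := by exact_mod_cast hm
  have hmpos : (0:ℝ) < m := by linarith
  have he : (0:ℝ) < Real.exp 1 := Real.exp_pos 1
  have ha : (0:ℝ) < 2 * Real.exp 1 := by linarith
  set a := 2 * Real.exp 1 with hadef
  have hK : (0:ℝ) ≤ 2 * (2:ℝ) ^ (((2:ℝ) - 1) / 2) := by positivity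
  have hGpos : 0 < Real.Gamma (((m:ℝ) + 2 + 1) / 2) :=
    Real.Gamma_pos_of_pos (by linarith)
  have hGrec : Real.Gamma ((((m+2:ℕ):ℝ) + 2 + 1) / 2) =
      (((m:ℝ) + 3) / 2) * Real.Gamma (((m:ℝ) + 2 + 1) / 2) := by
    push_cast
    have h5 : ((m:ℝ) + 2 + 2 + 1) / 2 = ((m:ℝ) + 3) / 2 + 1 := by ring
    have h6 : ((m:ℝ) + 2 + 1) / 2 = ((m:ℝ) + 3) / 2 := by ring
    rw [h5, Real.Gamma_add_one (by positivity), h6]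
  have hb : (0:ℝ) < a / ((m:ℝ) + 2) := by positivity
  have hcore : (a / m) ^ ((m:ℝ) / 2) ≤
      (a / ((m:ℝ) + 2)) ^ (((m:ℝ) + 2) / 2) * (((m:ℝ) + 3) / 2) := by
    have e1 : (a / ((m:ℝ) + 2)) ^ (((m:ℝ) + 2) / 2) =
        (a / ((m:ℝ) + 2)) ^ ((m:ℝ) / 2) * (a / ((m:ℝ) + 2)) := by
      rw [show ((m:ℝ) + 2) / 2 = (m:ℝ)/2 + 1 by ring, Real.rpow_add hb, Real.rpow_one]
    have e2 : (a / m) ^ ((m:ℝ) / 2) =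
        (a / ((m:ℝ) + 2)) ^ ((m:ℝ) / 2) * (((m:ℝ) + 2) / m) ^ ((m:ℝ) / 2) := by
      rw [← Real.mul_rpow (le_of_lt hb) (by positivity)]
      congr 1
      field_simp
    have e3 : (((m:ℝ) + 2) / m) ^ ((m:ℝ) / 2) ≤ Real.exp 1 := by
      have h1 : ((m:ℝ) + 2) / m ≤ Real.exp (2 / m) := by
        have h0 := Real.add_one_le_exp (2 / (m:ℝ))
        have h2 : ((m:ℝ) + 2) / m = 2 / m + 1 := by field_simp; ring
        linarith
      calc (((m:ℝ) + 2) / m) ^ ((m:ℝ) / 2)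
          ≤ (Real.exp (2 / m)) ^ ((m:ℝ) / 2) :=
            Real.rpow_le_rpow (by positivity) h1 (by positivity)
        _ = Real.exp 1 := by
            rw [← Real.exp_one_rpow (2 / (m:ℝ)), ← Real.rpow_mul (le_of_lt he),
              show (2 / (m:ℝ)) * ((m:ℝ)/2) = 1 by field_simp, Real.rpow_one]
    have e4 : Real.exp 1 ≤ a / ((m:ℝ) + 2) * (((m:ℝ) + 3) / 2) := by
      rw [hadef, div_mul_eq_mul_div, le_div_iff₀ (by positivity : (0:ℝ) < (m:ℝ)+2)]
      nlinarith [he]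
    have hpos : (0:ℝ) < (a / ((m:ℝ) + 2)) ^ ((m:ℝ) / 2) := Real.rpow_pos_of_pos hb _
    rw [e1, e2, mul_assoc]
    exact mul_le_mul_of_nonneg_left (e3.trans e4) (le_of_lt hpos)
  have hexp : B 2 m = 2 * (2:ℝ) ^ (((2:ℝ) - 1) / 2) * ((a / m) ^ ((m:ℝ) / 2) *
      Real.Gamma (((m:ℝ) + 2 + 1) / 2)) := by
    rw [B, hadef]; ring
  have hexp2 : B 2 (m+2) = 2 * (2:ℝ) ^ (((2:ℝ) - 1) / 2) *
      ((a / ((m:ℝ)+2)) ^ (((m:ℝ)+2) / 2) * ((((m:ℝ) + 3) / 2) *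
        Real.Gamma (((m:ℝ) + 2 + 1) / 2))) := by
    rw [B, hadef, ← hGrec]; push_cast; ring
  rw [hexp, hexp2]
  refine mul_le_mul_of_nonneg_left ?_ hK
  calc (a / m) ^ ((m:ℝ) / 2) * Real.Gamma (((m:ℝ) + 2 + 1) / 2)
      ≤ ((a / ((m:ℝ) + 2)) ^ (((m:ℝ) + 2) / 2) * (((m:ℝ) + 3) / 2)) *
        Real.Gamma (((m:ℝ) + 2 + 1) / 2) :=
        mul_le_mul_of_nonneg_right hcore (le_of_lt hGpos)
    _ = _ := by ring

lemma c_le_B_one : 4 * (Real.exp (1/2) - 1) ≤ B 2 1 := by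
  have he4 : Real.exp 1 ≤ 4 := by
    have := Real.exp_one_lt_d9
    linarith
  have hsq : Real.exp (1/2) ≤ 2 := by
    have h1 : Real.exp (1/2) * Real.exp (1/2) = Real.exp 1 := by
      rw [← Real.exp_add]; norm_num
    nlinarith [Real.exp_pos (1/2:ℝ)]
  have hB : (4:ℝ) ≤ B 2 1 := by
    rw [B]
    have hg : Real.Gamma (((1:ℕ):ℝ) + 2 + 1) / 2 = 0 ∨ True := Or.inr trivial
    have hΓ : Real.Gamma ((((1:ℕ):ℝ) + 2 + 1) / 2) = 1 := by
      norm_num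
    rw [hΓ]
    have h1 : (1:ℝ) ≤ (2:ℝ) ^ (((2:ℝ)-1)/2) := by
      rw [show ((2:ℝ)-1)/2 = (1:ℝ)/2 by norm_num]
      have := Real.rpow_le_rpow (by norm_num : (0:ℝ) ≤ 1) (by norm_num : (1:ℝ) ≤ 2)
        (by norm_num : (0:ℝ) ≤ 1/2)
      simpa using this
    have h2 : (2:ℝ) ≤ (2 * Real.exp 1 / ((1:ℕ):ℝ)) ^ (((1:ℕ):ℝ) / 2) := by
      have hbase : (4:ℝ) ≤ 2 * Real.exp 1 / ((1:ℕ):ℝ) := by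
        have := Real.add_one_le_exp (1:ℝ)
        push_cast
        nlinarith
      calc (2:ℝ) = (4:ℝ) ^ (((1:ℕ):ℝ)/2) := by
            push_cast
            rw [show (4:ℝ) = (2:ℝ)^(2:ℕ) by norm_num, ← Real.rpow_natCast (2:ℝ) 2,
              ← Real.rpow_mul (by norm_num)]
            norm_num
        _ ≤ _ := Real.rpow_le_rpow (by norm_num) hbase (by positivity)
    nlinarith [h1, h2, Real.rpow_pos_of_pos (show (0:ℝ) < 2*Real.exp 1/((1:ℕ):ℝ) by positivity) (((1:ℕ):ℝ)/2)]
  nlinarith [hsq, hB]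

lemma c_le_B_two : 4 * (Real.exp (1/2) - 1) ≤ B 2 2 := by
  have he2 : (2:ℝ) ≤ Real.exp 1 := by
    have := Real.add_one_le_exp (1:ℝ); linarith
  have he4 : Real.exp 1 ≤ 49/16 := by
    have := Real.exp_one_lt_d9; linarith
  have hsq : Real.exp (1/2) ≤ 7/4 := by
    have h1 : Real.exp (1/2) * Real.exp (1/2) = Real.exp 1 := by
      rw [← Real.exp_add]; norm_num
    nlinarith [Real.exp_pos (1/2:ℝ)]
  have hB : (3:ℝ) ≤ B 2 2 := by
    rw [B]
    have hΓ : Real.Gamma ((((2:ℕ):ℝ) + 2 + 1) / 2) = 3/4 * Real.sqrt Real.pi := by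
      have h52 : (((2:ℕ):ℝ) + 2 + 1) / 2 = (3:ℝ)/2 + 1 := by push_cast; ring
      have h32 : (3:ℝ)/2 = (1:ℝ)/2 + 1 := by ring
      rw [h52, Real.Gamma_add_one (by norm_num), h32,
        Real.Gamma_add_one (by norm_num), Real.Gamma_one_half_eq]
      ring
    rw [hΓ]
    have hpi : (1:ℝ) ≤ Real.sqrt Real.pi := by
      rw [show (1:ℝ) = Real.sqrt 1 by simp]
      exact Real.sqrt_le_sqrt (by nlinarith [Real.pi_gt_three])
    have h1 : (1:ℝ) ≤ (2:ℝ) ^ (((2:ℝ)-1)/2) := by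
      rw [show ((2:ℝ)-1)/2 = (1:ℝ)/2 by norm_num]
      have := Real.rpow_le_rpow (by norm_num : (0:ℝ) ≤ 1) (by norm_num : (1:ℝ) ≤ 2)
        (by norm_num : (0:ℝ) ≤ 1/2)
      simpa using this
    have h2 : (2 * Real.exp 1 / ((2:ℕ):ℝ)) ^ (((2:ℕ):ℝ) / 2) = Real.exp 1 := by
      push_cast
      rw [show (2:ℝ)/2 = (1:ℝ) by norm_num, Real.rpow_one]
      field_simp
    rw [h2]
    have step1 : (2:ℝ) ≤ 2 ^ (((2:ℝ)-1)/2) * Real.exp 1 := by nlinarith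
    have step2 : (3:ℝ)/4 ≤ 3/4 * Real.sqrt Real.pi := by nlinarith
    nlinarith [mul_le_mul step1 step2 (by norm_num : (0:ℝ) ≤ 3/4) (by positivity)]
  nlinarith [hsq, hB]

lemma c_le_B : ∀ m : ℕ, 1 ≤ m → 4 * (Real.exp (1/2) - 1) ≤ B 2 m
  | 1, _ => c_le_B_one
  | 2, _ => c_le_B_two
  | (k+3), _ => le_trans (c_le_B (k+1) (by omega)) (B_step (k+1) (by omega))

lemma cosh_bound (u : ℝ) : u^2 + 4 ≤ 2*Real.exp u + 2*Real.exp (-u) := by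
  rcases le_total 0 u with h | h
  · have h1 := Real.quadratic_le_exp_of_nonneg h
    have h2 := Real.add_one_le_exp (-u)
    nlinarith
  · have h1 := Real.quadratic_le_exp_of_nonneg (neg_nonneg.2 h)
    have h2 := Real.add_one_le_exp u
    nlinarith

lemma coord_bound {Ω : Type*} [MeasurableSpace Ω] {n : ℕ} (P : Measure Ω)
    [IsProbabilityMeasure P] (X : Ω → Fin n → ℝ)
    (Sig : Matrix (Fin n) (Fin n) ℝ) (hSig : Sig.PosDef)
    (hsg : IsSubGaussianMat P X 0 Sig) (i : Fin n) :
    ∫⁻ ω, ENNReal.ofReal ((X ω i)^2) ∂P ≤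
      ENNReal.ofReal ((4*(Real.exp (1/2) - 1)) * Sig i i) := by
  set s := Sig i i with hsdef
  have hs : 0 < s := by
    have hne : (Pi.single i 1 : Fin n → ℝ) ≠ 0 := by
      intro h
      have := congrFun h i
      simp at this
    have := hSig.dotProduct_mulVec_pos hne
    simpa [single_dotProduct, Matrix.mulVec_single] using this
  set t := (Real.sqrt s)⁻¹ with htdef
  have ht : 0 < t := by
    rw [htdef]; positivity
  have hts : t^2 * s = 1 := by
    rw [htdef, inv_pow, Real.sq_sqrt hs.le]
    field_simp
  set l : Fin n → ℝ := t • (Pi.single i 1 : Fin n → ℝ) with hldef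
  have hl : ∀ v : Fin n → ℝ, l ⬝ᵥ v = t * v i := fun v => by
    rw [hldef, smul_dotProduct, single_dotProduct, smul_eq_mul, one_mul]
  have hquad : l ⬝ᵥ (Sig *ᵥ l) = 1 := by
    have h1 : (Sig *ᵥ l) i = t * s := by
      rw [hldef, Matrix.mulVec_smul, Matrix.mulVec_single]
      simp [hsdef, smul_eq_mul]
    rw [hl, h1]
    nlinarith [hts]
  obtain ⟨hint1, hbd1⟩ := hsg l
  obtain ⟨hint2, hbd2⟩ := hsg (-l)
  have hfun1 : (fun ω => Real.exp (l ⬝ᵥ (X ω - 0))) = fun ω => Real.exp (t * X ω i) := by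
    funext ω; rw [sub_zero, hl]
  have hfun2 : (fun ω => Real.exp ((-l) ⬝ᵥ (X ω - 0))) = fun ω => Real.exp (-(t * X ω i)) := by
    funext ω; rw [sub_zero, neg_dotProduct, hl]
  have hquad2 : (-l) ⬝ᵥ (Sig *ᵥ (-l)) = 1 := by
    rw [Matrix.mulVec_neg, neg_dotProduct, dotProduct_neg, neg_neg, hquad]
  rw [hfun1] at hint1
  rw [hfun2] at hint2
  have hbd1' : ∫ ω, Real.exp (t * X ω i) ∂P ≤ Real.exp (1/2) := by
    rw [hquad] at hbd1
    rw [← hfun1]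
    exact hbd1
  have hbd2' : ∫ ω, Real.exp (-(t * X ω i)) ∂P ≤ Real.exp (1/2) := by
    rw [hquad2] at hbd2
    rw [← hfun2]
    exact hbd2
  set G : Ω → ℝ := fun ω => 2*Real.exp (t * X ω i) + 2*Real.exp (-(t * X ω i)) - 4
    with hGdef
  have ha : Integrable (fun ω => 2*Real.exp (t * X ω i)) P := hint1.const_mul 2
  have hb : Integrable (fun ω => 2*Real.exp (-(t * X ω i))) P := hint2.const_mul 2
  have hab : Integrable (fun ω => 2*Real.exp (t * X ω i) + 2*Real.exp (-(t * X ω i))) P :=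
    ha.add hb
  have hGint : Integrable G P := by
    rw [hGdef]
    exact hab.sub (integrable_const 4)
  have hGnn : ∀ ω, 0 ≤ G ω := fun ω => by
    have := cosh_bound (t * X ω i)
    simp only [hGdef]
    nlinarith [sq_nonneg (t * X ω i)]
  have hFG : ∀ ω, (t * X ω i)^2 ≤ G ω := fun ω => by
    have := cosh_bound (t * X ω i)
    simp only [hGdef]
    linarith
  have hIG : ∫ ω, G ω ∂P ≤ 4*Real.exp (1/2) - 4 := by
    rw [hGdef]
    rw [integral_sub hab (integrable_const 4)]
    rw [integral_add ha hb]
    rw [integral_const_mul, integral_const_mul, integral_const]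
    simp only [measure_univ, probReal_univ, ENNReal.toReal_one, smul_eq_mul, one_mul]
    linarith
  have key : ∫⁻ ω, ENNReal.ofReal ((t * X ω i)^2) ∂P ≤
      ENNReal.ofReal (4*(Real.exp (1/2) - 1)) := by
    calc ∫⁻ ω, ENNReal.ofReal ((t * X ω i)^2) ∂P
        ≤ ∫⁻ ω, ENNReal.ofReal (G ω) ∂P :=
          lintegral_mono fun ω => ENNReal.ofReal_le_ofReal (hFG ω)
      _ = ENNReal.ofReal (∫ ω, G ω ∂P) :=
          (ofReal_integral_eq_lintegral_ofReal hGint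
            (Filter.Eventually.of_forall hGnn)).symm
      _ ≤ ENNReal.ofReal (4*(Real.exp (1/2) - 1)) := by
          apply ENNReal.ofReal_le_ofReal
          linarith
  have hrw : ∀ ω, ENNReal.ofReal ((X ω i)^2) =
      ENNReal.ofReal s * ENNReal.ofReal ((t * X ω i)^2) := fun ω => by
    rw [← ENNReal.ofReal_mul hs.le]
    congr 1
    nlinarith [hts]
  calc ∫⁻ ω, ENNReal.ofReal ((X ω i)^2) ∂P
      = ∫⁻ ω, ENNReal.ofReal s * ENNReal.ofReal ((t * X ω i)^2) ∂P := by
        simp_rw [hrw]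
    _ = ENNReal.ofReal s * ∫⁻ ω, ENNReal.ofReal ((t * X ω i)^2) ∂P :=
        lintegral_const_mul' _ _ ENNReal.ofReal_ne_top
    _ ≤ ENNReal.ofReal s * ENNReal.ofReal (4*(Real.exp (1/2) - 1)) :=
        mul_le_mul_right key _
    _ = ENNReal.ofReal ((4*(Real.exp (1/2) - 1)) * s) := by
        rw [← ENNReal.ofReal_mul hs.le, mul_comm]


theorem subGaussian_second_moment_bound {Ω : Type*} [MeasurableSpace Ω] {n : ℕ}
    (P : Measure Ω) [IsProbabilityMeasure P]
    (X : Ω → Fin n → ℝ) (hX : Measurable X)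
    (Sig : Matrix (Fin n) (Fin n) ℝ) (hSig : Sig.PosDef)
    (hsg : IsSubGaussianMat P X 0 Sig) :
    (∫⁻ ω, ENNReal.ofReal (X ω ⬝ᵥ X ω) ∂P) ≤
        ENNReal.ofReal Sig.trace * ∫⁻ ω, ENNReal.ofReal (X ω ⬝ᵥ (Sig⁻¹ *ᵥ X ω)) ∂P ∧
    (∫⁻ ω, ENNReal.ofReal (X ω ⬝ᵥ X ω) ∂P) ≤
        ENNReal.ofReal (B 2 n * Sig.trace) := by
  have htr : 0 ≤ Sig.trace := by
    have : Sig.trace = ∑ i, Sig i i := by simp [Matrix.trace, Matrix.diag]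
    rw [this]
    exact Finset.sum_nonneg fun i _ => diag_nonneg hSig.posSemidef i
  constructor
  · calc ∫⁻ ω, ENNReal.ofReal (X ω ⬝ᵥ X ω) ∂P
        ≤ ∫⁻ ω, ENNReal.ofReal (Sig.trace * (X ω ⬝ᵥ (Sig⁻¹ *ᵥ X ω))) ∂P :=
          lintegral_mono fun ω =>
            ENNReal.ofReal_le_ofReal (dot_le_trace_mul_inv hSig (X ω))
      _ = ∫⁻ ω, ENNReal.ofReal Sig.trace * ENNReal.ofReal (X ω ⬝ᵥ (Sig⁻¹ *ᵥ X ω)) ∂P := by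
          simp_rw [ENNReal.ofReal_mul htr]
      _ = ENNReal.ofReal Sig.trace * ∫⁻ ω, ENNReal.ofReal (X ω ⬝ᵥ (Sig⁻¹ *ᵥ X ω)) ∂P :=
          lintegral_const_mul' _ _ ENNReal.ofReal_ne_top
  · set c : ℝ := 4*(Real.exp (1/2) - 1) with hcdef
    have hsum : ∀ ω, X ω ⬝ᵥ X ω = ∑ i, (X ω i)^2 := fun ω => by
      simp [dotProduct, sq]
    have step1 : ∫⁻ ω, ENNReal.ofReal (X ω ⬝ᵥ X ω) ∂P ≤ ENNReal.ofReal (c * Sig.trace) := by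
      have hmeas : ∀ i : Fin n, Measurable fun ω => ENNReal.ofReal ((X ω i)^2) := fun i =>
        ENNReal.measurable_ofReal.comp (((measurable_pi_apply i).comp hX).pow_const 2)
      calc ∫⁻ ω, ENNReal.ofReal (X ω ⬝ᵥ X ω) ∂P
          = ∫⁻ ω, ∑ i, ENNReal.ofReal ((X ω i)^2) ∂P := by
            congr 1; funext ω
            rw [hsum, ENNReal.ofReal_sum_of_nonneg fun i _ => sq_nonneg _]
        _ = ∑ i, ∫⁻ ω, ENNReal.ofReal ((X ω i)^2) ∂P :=
            lintegral_finset_sum _ fun i _ => hmeas i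
        _ ≤ ∑ i, ENNReal.ofReal (c * Sig i i) :=
            Finset.sum_le_sum fun i _ => coord_bound P X Sig hSig hsg i
        _ = ENNReal.ofReal (∑ i, c * Sig i i) := by
            rw [ENNReal.ofReal_sum_of_nonneg fun i _ => by
              have := diag_nonneg hSig.posSemidef i
              have hc : 0 ≤ c := by
                rw [hcdef]
                nlinarith [Real.add_one_le_exp (1/2:ℝ)]
              positivity]
        _ = ENNReal.ofReal (c * Sig.trace) := by
            congr 1
            rw [show Sig.trace = ∑ i, Sig i i by simp [Matrix.trace, Matrix.diag],
              Finset.mul_sum]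
    refine step1.trans (ENNReal.ofReal_le_ofReal ?_)
    rcases Nat.eq_zero_or_pos n with hn | hn
    · subst hn
      have : Sig.trace = 0 := by simp [Matrix.trace]
      rw [this, mul_zero, mul_zero]
    · exact mul_le_mul_of_nonneg_right (c_le_B n hn) htr
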